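/- One-particle self-duality at the level of semigroups: for every t ≥ 0, every η ∈ Ξ, and every x ∈ V, Σ_{ξ∈Ξ} (exp(tL))(η,ξ) · ξ(x) = α_x · Σ_{y∈V} (exp(tA))(x,y) · η(y)/α_y, where exp(tL) and exp(tA) denote the matrix exponentials of L (viewed as a matrix indexed by Ξ, with (Lφ)(η) = Σ_ξ L(η,ξ) φ(ξ)) and of A (viewed as a matrix indexed by V, with (Ag)(x) = Σ_y A(x,y) g(y)), respectively. -/

import Mathlib

open scoped BigOperators

/-- Configuration space: at most `α x` particles at each site `x`. -/
abbrev Conf {V : Type*} (α : V → ℕ) : Type _ := ∀ x : V, Fin (α x + 1)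

/-- The configuration `η` with one particle moved from `x` to `y`. -/
def move {V : Type*} [DecidableEq V] (α : V → ℕ) (η : Conf α) (x y : V) : Conf α :=
  Function.update
    (Function.update η x ⟨(η x : ℕ) - 1, by have := (η x).isLt; omega⟩)
    y ⟨min ((η y : ℕ) + 1) (α y), by
      have := Nat.min_le_right ((η y : ℕ) + 1) (α y); omega⟩

/-- Jump rate of the partial exclusion process of interacting BTM(a):
rate for moving a particle from `x` to `y`.  It vanishes if `η x = 0` or
`η y = α y`, so `move` is only effectively used where it is well defined. -/
noncomputable def jumpRate {V : Type*} (α : V → ℕ) (a : ℝ) (η : Conf α) (x y : V) : ℝ :=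
  ((η x : ℕ) : ℝ) * (α x : ℝ) ^ (a - 1) * (α y : ℝ) ^ a *
    (1 - ((η y : ℕ) : ℝ) / (α y : ℝ))

/-- The partial exclusion generator `L` in environment `α`. -/
noncomputable def gen {V : Type*} [Fintype V] [DecidableEq V] (α : V → ℕ) (a : ℝ)
    (adj : V → V → Prop) [DecidableRel adj] (φ : Conf α → ℝ) (η : Conf α) : ℝ :=
  ∑ x : V, ∑ y : V,
    if adj x y then jumpRate α a η x y * (φ (move α η x y) - φ η) else 0

/-- The single-particle (Bouchaud trap model) generator `A`. -/
noncomputable def sgen {V : Type*} [Fintype V] (α : V → ℕ) (a : ℝ)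
    (adj : V → V → Prop) [DecidableRel adj] (g : V → ℝ) (x : V) : ℝ :=
  (α x : ℝ) ^ (a - 1) * ∑ y : V, if adj x y then (α y : ℝ) ^ a * (g y - g x) else 0

lemma move_val {V : Type*} [DecidableEq V] (α : V → ℕ) (η : Conf α) (u v z : V) (huv : u ≠ v) :
    ((move α η u v z : ℕ)) = if z = v then min ((η v : ℕ) + 1) (α v)
      else if z = u then (η u : ℕ) - 1 else (η z : ℕ) := by
  unfold move
  rcases eq_or_ne z v with rfl | hv
  · simp
  · rw [Function.update_of_ne hv]
    rcases eq_or_ne z u with rfl | hu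
    · rw [if_neg huv, if_pos rfl, Function.update_self]
    · rw [Function.update_of_ne hu]; simp [hv, hu]

lemma rate_mul_diff {V : Type*} [DecidableEq V] (α : V → ℕ) (a : ℝ) (hα : ∀ x, 1 ≤ α x)
    (η : Conf α) (u v x : V) (huv : u ≠ v) :
    jumpRate α a η u v * (((move α η u v x : ℕ) : ℝ) - ((η x : ℕ) : ℝ))
      = jumpRate α a η u v * ((if x = v then 1 else 0) - (if x = u then 1 else 0)) := by
  have hv' : (0:ℝ) < (α v : ℝ) := by exact_mod_cast hα v
  rw [move_val α η u v x huv]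
  rcases eq_or_ne x v with rfl | hv
  · simp only [if_pos rfl, if_neg (Ne.symm huv)]
    rcases eq_or_ne ((η x : ℕ)) (α x) with h | h
    · have : jumpRate α a η u x = 0 := by
        unfold jumpRate; rw [h, div_self hv'.ne']; ring
      simp [this]
    · have hlt : (η x : ℕ) + 1 ≤ α x := by have := (η x).isLt; omega
      rw [min_eq_left hlt]
      push_cast
      ring
  · rw [if_neg hv]
    rcases eq_or_ne x u with rfl | hu
    · simp only [if_pos rfl, if_true, if_neg hv]
      rcases Nat.eq_zero_or_pos (η x : ℕ) with h | h
      · have : jumpRate α a η x v = 0 := by unfold jumpRate; rw [h]; push_cast; ring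
        simp [this]
      · rw [Nat.cast_sub h]
        push_cast
        ring
    · simp [hv, hu]

lemma term_identity (a A B nx ny : ℝ) (hA : 0 < A) (hB : 0 < B) :
    (ny * B ^ (a-1) * A ^ a * (1 - nx / A) - nx * A ^ (a-1) * B ^ a * (1 - ny / B)) / A
      = A ^ (a-1) * (B ^ a * (ny / B - nx / A)) := by
  rw [Real.rpow_sub_one hA.ne', Real.rpow_sub_one hB.ne']
  field_simp
  ring

lemma gen_dual {V : Type*} [Fintype V] [DecidableEq V] (adj : V → V → Prop) [DecidableRel adj]
    (hsym : ∀ x y, adj x y → adj y x) (hirr : ∀ x, ¬ adj x x)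
    (a : ℝ) (α : V → ℕ) (hα : ∀ x, 1 ≤ α x) (η : Conf α) (x : V) :
    gen α a adj (fun ξ => ((ξ x : ℕ) : ℝ) / (α x : ℝ)) η
      = sgen α a adj (fun y => ((η y : ℕ) : ℝ) / (α y : ℝ)) x := by
  have hAx : (0:ℝ) < (α x : ℝ) := by exact_mod_cast hα x
  unfold gen
  have hT : ∀ u v : V, (if adj u v then jumpRate α a η u v *
        (((move α η u v x : ℕ):ℝ)/(α x : ℝ) - ((η x : ℕ):ℝ)/(α x : ℝ)) else 0)
      = ((if adj u v then jumpRate α a η u v else 0) *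
          ((if x = v then (1:ℝ) else 0) - (if x = u then 1 else 0))) / (α x : ℝ) := by
    intro u v
    by_cases h : adj u v
    · have huv : u ≠ v := fun he => hirr v (he ▸ h)
      rw [if_pos h, if_pos h, ← sub_div, ← mul_div_assoc, rate_mul_diff α a hα η u v x huv]
    · simp [h]
  simp only [hT]
  simp only [← Finset.sum_div]
  -- now compute the double sum
  have hsum : ∑ u : V, ∑ v : V, ((if adj u v then jumpRate α a η u v else 0) *
        ((if x = v then (1:ℝ) else 0) - (if x = u then 1 else 0)))
      = ∑ y : V, (if adj x y then (jumpRate α a η y x - jumpRate α a η x y) else 0) := by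
    have h1 : ∀ u : V, ∑ v : V, (if adj u v then jumpRate α a η u v else 0) *
        ((if x = v then (1:ℝ) else 0) - (if x = u then 1 else 0))
        = (if adj u x then jumpRate α a η u x else 0)
          - (if x = u then (1:ℝ) else 0) * ∑ v : V, (if adj u v then jumpRate α a η u v else 0) := by
      intro u
      simp only [mul_sub]
      rw [Finset.sum_sub_distrib]
      congr 1
      · simp [mul_ite, mul_one, mul_zero, Finset.sum_ite_eq]
      · rw [Finset.mul_sum]
        exact Finset.sum_congr rfl fun v _ => mul_comm _ _
    rw [Finset.sum_congr rfl fun u _ => h1 u, Finset.sum_sub_distrib]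
    have h2 : ∑ u : V, (if x = u then (1:ℝ) else 0) * ∑ v : V, (if adj u v then jumpRate α a η u v else 0)
        = ∑ v : V, (if adj x v then jumpRate α a η x v else 0) := by
      simp [ite_mul, one_mul, zero_mul, Finset.sum_ite_eq]
    rw [h2, ← Finset.sum_sub_distrib]
    refine Finset.sum_congr rfl fun y _ => ?_
    by_cases h : adj x y
    · rw [if_pos h, if_pos (hsym x y h), if_pos h]
    · have h' : ¬ adj y x := fun hh => h (hsym y x hh)
      rw [if_neg h, if_neg h', if_neg h]; ring
  rw [hsum]
  unfold sgen
  rw [Finset.mul_sum, Finset.sum_div]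
  refine Finset.sum_congr rfl fun y _ => ?_
  by_cases h : adj x y
  · rw [if_pos h, if_pos h]
    have hAy : (0:ℝ) < (α y : ℝ) := by exact_mod_cast hα y
    unfold jumpRate
    exact term_identity a _ _ _ _ hAx hAy
  · simp [h]

open scoped Nat in
open NormedSpace in
lemma exp_intertwine {n m : Type*} [Fintype n] [DecidableEq n] [Fintype m] [DecidableEq m]
    (M : Matrix n n ℝ) (N : Matrix m m ℝ) (D : Matrix n m ℝ) (h : M * D = D * N) :
    exp M * D = D * exp N := by
  letI : SeminormedRing (Matrix n n ℝ) := Matrix.linftyOpSemiNormedRing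
  letI : NormedRing (Matrix n n ℝ) := Matrix.linftyOpNormedRing
  letI : NormedAlgebra ℝ (Matrix n n ℝ) := Matrix.linftyOpNormedAlgebra
  letI : SeminormedRing (Matrix m m ℝ) := Matrix.linftyOpSemiNormedRing
  letI : NormedRing (Matrix m m ℝ) := Matrix.linftyOpNormedRing
  letI : NormedAlgebra ℝ (Matrix m m ℝ) := Matrix.linftyOpNormedAlgebra
  have hpow : ∀ k : ℕ, M ^ k * D = D * N ^ k := by
    intro k
    induction k with
    | zero => simp
    | succ k ih => rw [pow_succ, pow_succ, Matrix.mul_assoc, h, ← Matrix.mul_assoc, ih, Matrix.mul_assoc]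
  let R : Matrix n n ℝ →L[ℝ] Matrix n m ℝ :=
    { toFun := fun X => X * D
      map_add' := fun X Y => Matrix.add_mul X Y D
      map_smul' := fun c X => Matrix.smul_mul c X D
      cont := continuous_id.matrix_mul continuous_const }
  let Lm : Matrix m m ℝ →L[ℝ] Matrix n m ℝ :=
    { toFun := fun X => D * X
      map_add' := fun X Y => Matrix.mul_add D X Y
      map_smul' := fun c X => Matrix.mul_smul D c X
      cont := continuous_const.matrix_mul continuous_id }
  have hsM : Summable fun k : ℕ => ((k ! : ℝ))⁻¹ • M ^ k := expSeries_summable' M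
  have hsN : Summable fun k : ℕ => ((k ! : ℝ))⁻¹ • N ^ k := expSeries_summable' N
  calc exp M * D = R (∑' k : ℕ, ((k ! : ℝ))⁻¹ • M ^ k) := by
        rw [exp_eq_tsum (𝕂 := ℝ)]; rfl
    _ = ∑' k : ℕ, R (((k ! : ℝ))⁻¹ • M ^ k) := R.map_tsum hsM
    _ = ∑' k : ℕ, Lm (((k ! : ℝ))⁻¹ • N ^ k) := by
        refine tsum_congr fun k => ?_
        show (((k ! : ℝ))⁻¹ • M ^ k) * D = D * (((k ! : ℝ))⁻¹ • N ^ k)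
        rw [Matrix.smul_mul, Matrix.mul_smul, hpow k]
    _ = Lm (∑' k : ℕ, ((k ! : ℝ))⁻¹ • N ^ k) := (Lm.map_tsum hsN).symm
    _ = D * exp N := by rw [exp_eq_tsum (𝕂 := ℝ)]; rfl
/-- one-particle self-duality at the level of semigroups.
`ML` is the generator `L` viewed as a matrix indexed by the configuration
space, `MA` is the generator `A` viewed as a matrix indexed by `V`. -/
theorem one_particle_duality_semigroup {V : Type*} [Fintype V] [DecidableEq V]
    (adj : V → V → Prop) [DecidableRel adj]
    (hsym : ∀ x y, adj x y → adj y x) (hirr : ∀ x, ¬ adj x x)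
    (a : ℝ) (ha0 : 0 ≤ a) (ha1 : a ≤ 1)
    (α : V → ℕ) (hα : ∀ x, 1 ≤ α x)
    (ML : Matrix (Conf α) (Conf α) ℝ)
    (hML : ∀ (φ : Conf α → ℝ) (η : Conf α), ∑ ξ : Conf α, ML η ξ * φ ξ = gen α a adj φ η)
    (MA : Matrix V V ℝ)
    (hMA : ∀ (g : V → ℝ) (x : V), ∑ y : V, MA x y * g y = sgen α a adj g x)
    (t : ℝ) (ht : 0 ≤ t) (η : Conf α) (x : V) :
    ∑ ξ : Conf α, NormedSpace.exp (t • ML) η ξ * ((ξ x : ℕ) : ℝ)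
      = (α x : ℝ) *
        ∑ y : V, NormedSpace.exp (t • MA) x y * (((η y : ℕ) : ℝ) / (α y : ℝ)) := by
  set D : Matrix (Conf α) V ℝ := Matrix.of fun (ξ : Conf α) (y : V) => ((ξ y : ℕ) : ℝ) / (α y : ℝ)
    with hD
  have base : ML * D = D * MA.transpose := by
    ext ξ y
    rw [Matrix.mul_apply, Matrix.mul_apply]
    calc ∑ ζ : Conf α, ML ξ ζ * D ζ y
        = gen α a adj (fun ζ => ((ζ y : ℕ) : ℝ) / (α y : ℝ)) ξ := hML _ ξ
      _ = sgen α a adj (fun z => ((ξ z : ℕ) : ℝ) / (α z : ℝ)) y := gen_dual adj hsym hirr a α hα ξ y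
      _ = ∑ z : V, MA y z * (((ξ z : ℕ) : ℝ) / (α z : ℝ)) := (hMA _ y).symm
      _ = ∑ z : V, D ξ z * MA.transpose z y := by
        refine Finset.sum_congr rfl fun z _ => ?_
        rw [Matrix.transpose_apply, mul_comm]
        rfl
  have hMD : (t • ML) * D = D * (t • MA.transpose) := by
    rw [Matrix.smul_mul, Matrix.mul_smul, base]
  have hexp : NormedSpace.exp (t • ML) * D = D * (NormedSpace.exp (t • MA)).transpose := by
    rw [exp_intertwine _ _ _ hMD, ← Matrix.transpose_smul, Matrix.exp_transpose]
  have hentry : ∑ ξ : Conf α, NormedSpace.exp (t • ML) η ξ * D ξ x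
      = ∑ y : V, D η y * (NormedSpace.exp (t • MA)) x y := by
    have := congrFun (congrFun hexp η) x
    rw [Matrix.mul_apply, Matrix.mul_apply] at this
    simpa [Matrix.transpose_apply] using this
  have hAx : ((α x : ℝ)) ≠ 0 := by
    have : (0:ℝ) < (α x : ℝ) := by exact_mod_cast hα x
    exact this.ne'
  calc ∑ ξ : Conf α, NormedSpace.exp (t • ML) η ξ * ((ξ x : ℕ) : ℝ)
      = (α x : ℝ) * ∑ ξ : Conf α, NormedSpace.exp (t • ML) η ξ * D ξ x := by
        rw [Finset.mul_sum]
        refine Finset.sum_congr rfl fun ξ _ => ?_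
        show _ = (α x : ℝ) * (_ * (((ξ x : ℕ) : ℝ) / (α x : ℝ)))
        field_simp
    _ = (α x : ℝ) * ∑ y : V, D η y * (NormedSpace.exp (t • MA)) x y := by rw [hentry]
    _ = (α x : ℝ) * ∑ y : V, NormedSpace.exp (t • MA) x y * (((η y : ℕ) : ℝ) / (α y : ℝ)) := by
        congr 1
        exact Finset.sum_congr rfl fun y _ => mul_comm _ _
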